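/- Region growing lemma (existential form): for any vertex set S and 0≤a<b, there exists a radius t₀∈[a,b) such that C(S,t₀) ≤ (1/(b−a))·ln(Vol(S,b)/Vol(S,a))·Vol(S,t₀). Moreover t₀ can be chosen from a set of at most |V| candidate radii. -/

import Mathlib

open MeasureTheory

open Set in
/-- Key analytic fact: a monotone function on `[a,b]` with a.e. derivative `h` on `(a,b)`
satisfies `∫ t in (a,b), h t ≤ g b - g a` (Lebesgue differentiation inequality). -/
lemma monotoneOn_integral_deriv_le {a b : ℝ} (hab : a ≤ b) {g h : ℝ → ℝ}
    (hmono : MonotoneOn g (Icc a b))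
    (hderiv : ∀ᵐ t ∂(volume.restrict (Ioo a b)), HasDerivAt g (h t) t) :
    ∫ t in Ioo a b, h t ≤ g b - g a := by
  -- extend `g` to a monotone function on all of `ℝ` by clamping
  set G : ℝ → ℝ := fun t => g (max a (min b t)) with hG
  have hclampmem : ∀ t, max a (min b t) ∈ Icc a b := fun t =>
    ⟨le_max_left _ _, max_le (hab) (min_le_left _ _)⟩
  have hGmono : Monotone G := by
    intro s t hst
    exact hmono (hclampmem s) (hclampmem t)
      (max_le_max le_rfl (min_le_min le_rfl hst))
  have hGa : G a = g a := by simp [hG, min_eq_right hab]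
  have hGb : G b = g b := by simp [hG, max_eq_right hab]
  -- the a.e. derivative of `G`
  set μ := hGmono.stieltjesFunction.measure with hμ
  set d : ℝ → ℝ := fun t => (μ.rnDeriv volume t).toReal with hd
  have hGd : ∀ᵐ t, HasDerivAt G (d t) t := hGmono.ae_hasDerivAt
  -- on `(a,b)`, `G = g`, so `d = h` a.e. there
  have heq : ∀ᵐ t ∂(volume.restrict (Ioo a b)), h t = d t := by
    filter_upwards [hderiv, ae_restrict_of_ae hGd, ae_restrict_mem measurableSet_Ioo]
      with t ht hdt htmem
    have hGg : G =ᶠ[nhds t] g := by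
      filter_upwards [isOpen_Ioo.mem_nhds htmem] with u hu
      simp [hG, min_eq_right hu.2.le, max_eq_right hu.1.le]
    have : HasDerivAt G (h t) t := ht.congr_of_eventuallyEq hGg
    exact this.unique hdt
  have hμIoo : μ (Ioo a b) ≠ ⊤ := by
    rw [StieltjesFunction.measure_Ioo]
    exact ENNReal.ofReal_ne_top
  calc ∫ t in Ioo a b, h t = ∫ t in Ioo a b, d t := integral_congr_ae heq
    _ ≤ (μ (Ioo a b)).toReal := Measure.setIntegral_toReal_rnDeriv_le hμIoo
    _ ≤ G b - G a := by
        rw [StieltjesFunction.measure_Ioo]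
        have h1 : Function.leftLim (hGmono.stieltjesFunction : ℝ → ℝ) b ≤
            hGmono.stieltjesFunction b :=
          hGmono.stieltjesFunction.mono.leftLim_le le_rfl
        have h2 : hGmono.stieltjesFunction b = G b := by
          rw [hGmono.stieltjesFunction_eq]
          apply le_antisymm _ (hGmono.le_rightLim le_rfl)
          have : Function.rightLim G b ≤ G (b + 1) := hGmono.rightLim_le (by linarith)
          refine le_trans this (le_of_eq ?_)
          simp [hG, min_eq_left (by linarith : b ≤ b + 1), max_eq_right hab]
        have h3 : G a ≤ hGmono.stieltjesFunction a := by
          rw [hGmono.stieltjesFunction_eq]; exact hGmono.le_rightLim le_rfl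
        have hGab : G a ≤ G b := hGmono hab
        rcases le_or_gt (Function.leftLim (hGmono.stieltjesFunction : ℝ → ℝ) b -
            hGmono.stieltjesFunction a) 0 with hx | hx
        · rw [ENNReal.ofReal_eq_zero.2 hx]
          simpa using hGab
        · rw [ENNReal.toReal_ofReal hx.le]
          linarith
    _ = g b - g a := by rw [hGa, hGb]

/-- Region growing lemma (existential form). In the region growing setting
(`Vol` positive, nondecreasing, with derivative `C` a.e., `C/Vol` integrable), given a set
`T` of at most `|V|` candidate radii such that every radius in `[a,b)` is dominated by a
candidate (smaller cut capacity, larger volume), there exists a radius `t₀ ∈ T ∩ [a,b)`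
with `C(t₀) ≤ (1/(b-a))·ln(Vol(b)/Vol(a))·Vol(t₀)`. -/
theorem region_growing_exists {V : Type*} [Fintype V]
    (a b : ℝ) (h0 : 0 ≤ a) (hab : a < b) (Vol C : ℝ → ℝ)
    (hpos : ∀ t ∈ Set.Icc a b, 0 < Vol t)
    (hmono : MonotoneOn Vol (Set.Icc a b))
    (hderiv : ∀ᵐ t ∂(volume.restrict (Set.Ioo a b)), HasDerivAt Vol (C t) t)
    (hint : IntegrableOn (fun t => C t / Vol t) (Set.Ioo a b))
    (T : Finset ℝ) (hTcard : T.card ≤ Fintype.card V)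
    (hTrep : ∀ t ∈ Set.Ico a b, ∃ t' ∈ T, t' ∈ Set.Ico a b ∧ C t' ≤ C t ∧ Vol t ≤ Vol t') :
    ∃ t₀ ∈ T, t₀ ∈ Set.Ico a b ∧
      C t₀ ≤ (b - a)⁻¹ * Real.log (Vol b / Vol a) * Vol t₀ := by
  set K : ℝ := (b - a)⁻¹ * Real.log (Vol b / Vol a) with hK
  have hVa : 0 < Vol a := hpos a ⟨le_rfl, hab.le⟩
  have hVb : 0 < Vol b := hpos b ⟨hab.le, le_rfl⟩
  have hVab : Vol a ≤ Vol b := hmono ⟨le_rfl, hab.le⟩ ⟨hab.le, le_rfl⟩ hab.le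
  have hlog0 : 0 ≤ Real.log (Vol b / Vol a) :=
    Real.log_nonneg ((one_le_div hVa).2 hVab)
  have hK0 : 0 ≤ K := mul_nonneg (inv_nonneg.2 (by linarith)) hlog0
  by_contra hcon
  push_neg at hcon
  -- every `t ∈ [a,b)` satisfies `K * Vol t < C t`
  have hstrict : ∀ t ∈ Set.Ico a b, K * Vol t < C t := by
    intro t ht
    obtain ⟨t', ht'T, ht'I, hC, hV⟩ := hTrep t ht
    have := hcon t' ht'T ht'I
    calc K * Vol t ≤ K * Vol t' := by
          have hVt0 : 0 < Vol t := hpos t ⟨ht.1, ht.2.le⟩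
          exact mul_le_mul_of_nonneg_left hV hK0
      _ < C t' := this
      _ ≤ C t := hC
  -- log of volume: a.e. derivative `C/Vol` on `(a,b)`
  have hlogmono : MonotoneOn (fun t => Real.log (Vol t)) (Set.Icc a b) := by
    intro s hs t ht hst
    exact Real.log_le_log (hpos s hs) (hmono hs ht hst)
  have hlogderiv : ∀ᵐ t ∂(volume.restrict (Set.Ioo a b)),
      HasDerivAt (fun u => Real.log (Vol u)) (C t / Vol t) t := by
    filter_upwards [hderiv, ae_restrict_mem measurableSet_Ioo] with t ht htmem
    exact ht.log (hpos t ⟨htmem.1.le, htmem.2.le⟩).ne'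
  have hFTC : ∫ t in Set.Ioo a b, C t / Vol t ≤ Real.log (Vol b) - Real.log (Vol a) :=
    monotoneOn_integral_deriv_le hab.le hlogmono hlogderiv
  -- but the integrand is strictly bigger than `K` everywhere on `(a,b)`
  have hgt : ∀ t ∈ Set.Ioo a b, K < C t / Vol t := by
    intro t ht
    have hVt0 : 0 < Vol t := hpos t ⟨ht.1.le, ht.2.le⟩
    rw [lt_div_iff₀ hVt0]
    exact hstrict t ⟨ht.1.le, ht.2⟩
  have hintK : IntegrableOn (fun _ : ℝ => K) (Set.Ioo a b) :=
    integrableOn_const (by simp [Real.volume_Ioo])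
  have hnn : 0 ≤ᵐ[volume.restrict (Set.Ioo a b)] fun t => C t / Vol t - K := by
    filter_upwards [ae_restrict_mem measurableSet_Ioo] with t ht
    exact sub_nonneg.2 (hgt t ht).le
  have hintsub : IntegrableOn (fun t => C t / Vol t - K) (Set.Ioo a b) := hint.sub hintK
  have hposint : 0 < ∫ t in Set.Ioo a b, (C t / Vol t - K) := by
    rw [setIntegral_pos_iff_support_of_nonneg_ae hnn hintsub]
    have hsub : Set.Ioo a b ⊆ Function.support (fun t => C t / Vol t - K) ∩ Set.Ioo a b :=
      fun t ht => ⟨sub_ne_zero.2 (hgt t ht).ne', ht⟩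
    calc (0 : ENNReal) < ENNReal.ofReal (b - a) := by
            rw [ENNReal.ofReal_pos]; linarith
      _ = volume (Set.Ioo a b) := (Real.volume_Ioo).symm
      _ ≤ _ := measure_mono hsub
  have hsplit : ∫ t in Set.Ioo a b, (C t / Vol t - K) =
      (∫ t in Set.Ioo a b, C t / Vol t) - K * (b - a) := by
    rw [integral_sub hint hintK]
    congr 1
    simp [Real.volume_Ioo, ENNReal.toReal_ofReal (by linarith : (0:ℝ) ≤ b - a), mul_comm, hab.le]
  have hKba : K * (b - a) = Real.log (Vol b) - Real.log (Vol a) := by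
    have hba : b - a ≠ 0 := by linarith
    rw [hK, Real.log_div hVb.ne' hVa.ne']
    field_simp
  rw [hsplit, hKba] at hposint
  linarith
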